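/- Let H > 0 and γ₀ > γ₁ > γ₂ > γ₃ > 0, with Pliss constants N_{γ₀,γ₃}, c_{γ₀,γ₃}, N_{γ₁,γ₂}, c_{γ₁,γ₂} as in the Pliss lemma for bound H. Let m > ℓ > n > 0 be integers and (a_0, …, a_{m−1}) a real sequence with |a_i| ≤ H such that: (1/m)∑_{i<m} a_i ≥ γ₀ (a γ₀-string); (1/t)∑_{i<t} a_i < γ₂ for all t ∈ [n, ℓ] (an (n, γ₂)-obstruction up to ℓ); m ≥ N_{γ₀,γ₃}; m·c_{γ₀,γ₃} > ℓ; ℓ ≥ N_{γ₁,γ₂}; and ℓ·c_{γ₁,γ₂} > n. Then there exists k with ℓ ≤ k < m such that (1/J)∑_{j=1}^{J} a_{k−j} ≥ γ₃ for all 1 ≤ J ≤ k (a γ₃-quasi-expanding string) while (1/k)∑_{i<k} a_i < γ₁ (not a γ₁-string). -/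
import Mathlib


open Finset

private lemma mane_aux_incr (k : ℕ) (f : ℕ → ℕ)
    (hmono : ∀ i j, i < j → j < k → f i < f j)
    (hpos : ∀ i < k, 0 < f i) :
    ∀ i < k, i + 1 ≤ f i := by
  intro i
  induction i with
  | zero => intro h; exact hpos 0 h
  | succ i ih =>
    intro h
    have h1 : i < k := Nat.lt_of_succ_lt h
    have := hmono i (i + 1) (Nat.lt_succ_self i) h
    have := ih h1
    omega

/-- Sequence version of Mañé's Lemma II-5 (case `r = 0`): a `γ₀`-average
sequence containing an initial `(n, γ₂)`-obstruction up to `ℓ` admits, under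
quantitative density conditions coming from the Pliss constants
`(N_{γ₀,γ₃}, c_{γ₀,γ₃})` and `(N_{γ₁,γ₂}, c_{γ₁,γ₂})` (whose defining Pliss
properties are the hypotheses `hPliss₀₃` and `hPliss₁₂`), a backward
`γ₃`-Pliss time `k ∈ [ℓ, m)` whose forward average up to `k` is below `γ₁`. -/
theorem mane_sifting
    (H γ₀ γ₁ γ₂ γ₃ : ℝ) (hH : 0 < H)
    (h3 : 0 < γ₃) (h32 : γ₃ < γ₂) (h21 : γ₂ < γ₁) (h10 : γ₁ < γ₀)
    (N03 : ℕ) (hN03 : 1 ≤ N03) (c03 : ℝ) (hc03 : 0 < c03 ∧ c03 < 1)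
    (N12 : ℕ) (hN12 : 1 ≤ N12) (c12 : ℝ) (hc12 : 0 < c12 ∧ c12 < 1)
    (hPliss₀₃ : ∀ m' : ℕ, N03 ≤ m' → ∀ b : ℕ → ℝ, (∀ i < m', |b i| ≤ H) →
      γ₀ ≤ (∑ i ∈ Finset.range m', b i) / m' →
      ∃ k : ℕ, ∃ n : ℕ → ℕ, 1 ≤ k ∧ (m' : ℝ) * c03 ≤ k ∧
        (∀ i j, i < j → j < k → n i < n j) ∧
        (∀ i < k, 0 < n i ∧ n i ≤ m') ∧
        ∀ i < k, ∀ J : ℕ, 1 ≤ J → J ≤ n i →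
          γ₃ ≤ (∑ j ∈ Finset.range J, b (n i - 1 - j)) / J)
    (hPliss₁₂ : ∀ m' : ℕ, N12 ≤ m' → ∀ b : ℕ → ℝ, (∀ i < m', |b i| ≤ H) →
      γ₁ ≤ (∑ i ∈ Finset.range m', b i) / m' →
      ∃ k : ℕ, ∃ n : ℕ → ℕ, 1 ≤ k ∧ (m' : ℝ) * c12 ≤ k ∧
        (∀ i j, i < j → j < k → n i < n j) ∧
        (∀ i < k, 0 < n i ∧ n i ≤ m') ∧
        ∀ i < k, ∀ J : ℕ, 1 ≤ J → J ≤ n i →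
          γ₂ ≤ (∑ j ∈ Finset.range J, b (n i - 1 - j)) / J)
    (m ℓ n : ℕ) (hmn : n < ℓ) (hℓm : ℓ < m) (hn : 0 < n)
    (a : ℕ → ℝ) (hbd : ∀ i < m, |a i| ≤ H)
    -- `(a_0,…,a_{m−1})` is a `γ₀`-string
    (havg : γ₀ ≤ (∑ i ∈ Finset.range m, a i) / m)
    -- `(a_0,…,a_{ℓ−1})` is an `(n, γ₂)`-obstruction
    (hobs : ∀ t : ℕ, n ≤ t → t ≤ ℓ → (∑ i ∈ Finset.range t, a i) / t < γ₂)
    (hm03 : N03 ≤ m) (hmc : (m : ℝ) * c03 > ℓ)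
    (hℓ12 : N12 ≤ ℓ) (hℓc : (ℓ : ℝ) * c12 > n) :
    ∃ k : ℕ, ℓ ≤ k ∧ k < m ∧
      (∀ J : ℕ, 1 ≤ J → J ≤ k →
        γ₃ ≤ (∑ j ∈ Finset.range J, a (k - 1 - j)) / J) ∧
      (∑ i ∈ Finset.range k, a i) / k < γ₁ := by
  -- A convenient name for the backward-Pliss property at level `γ₃`.
  -- Step 1: produce at least one `γ₃`-Pliss time in `[ℓ, m]`.
  obtain ⟨k₀, f, hk₀1, hk₀c, hfmono, hfbd, hfpliss⟩ :=
    hPliss₀₃ m hm03 a hbd havg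
  have hfincr : ∀ i < k₀, i + 1 ≤ f i := by
    intro i hi
    exact mane_aux_incr k₀ f hfmono (fun i hi => (hfbd i hi).1) i hi
  have hℓk₀ : ℓ < k₀ := by
    have : (ℓ : ℝ) < k₀ := lt_of_lt_of_le hmc hk₀c
    exact_mod_cast this
  have hex : ∃ k : ℕ, ℓ ≤ k ∧ k ≤ m ∧ ∀ J : ℕ, 1 ≤ J → J ≤ k →
      γ₃ ≤ (∑ j ∈ Finset.range J, a (k - 1 - j)) / J := by
    refine ⟨f ℓ, ?_, (hfbd ℓ hℓk₀).2, fun J h1 h2 => hfpliss ℓ hℓk₀ J h1 h2⟩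
    have := hfincr ℓ hℓk₀
    omega
  classical
  set k := Nat.find hex with hkdef
  obtain ⟨hℓk, hkm, hkpliss⟩ := Nat.find_spec hex
  have hmin : ∀ j, j < k → ¬ (ℓ ≤ j ∧ j ≤ m ∧ ∀ J : ℕ, 1 ≤ J → J ≤ j →
      γ₃ ≤ (∑ i ∈ Finset.range J, a (j - 1 - i)) / J) := by
    intro j hj; exact Nat.find_min hex hj
  -- Step 2: the forward average up to `k` is below `γ₁`.
  have hlt : (∑ i ∈ Finset.range k, a i) / k < γ₁ := by
    by_contra hcon
    push_neg at hcon
    have hN12k : N12 ≤ k := le_trans hℓ12 hℓk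
    have hbdk : ∀ i < k, |a i| ≤ H := fun i hi => hbd i (lt_of_lt_of_le hi hkm)
    obtain ⟨k₁, g, hk₁1, hk₁c, hgmono, hgbd, hgpliss⟩ :=
      hPliss₁₂ k hN12k a hbdk hcon
    have hgincr : ∀ i < k₁, i + 1 ≤ g i := by
      intro i hi
      exact mane_aux_incr k₁ g hgmono (fun i hi => (hgbd i hi).1) i hi
    have hnk₁ : n < k₁ := by
      have h1 : (ℓ : ℝ) * c12 ≤ (k : ℝ) * c12 := by
        apply mul_le_mul_of_nonneg_right _ hc12.1.le
        exact_mod_cast hℓk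
      have : (n : ℝ) < k₁ := lt_of_lt_of_le (lt_of_lt_of_le hℓc h1) hk₁c
      exact_mod_cast this
    -- Any γ₂-Pliss time `t = g i` with `n < t` must equal `k`.
    have hkey : ∀ i < k₁, n < g i → g i = k := by
      intro i hi hni
      set t := g i with htdef
      have ht1 : 1 ≤ t := le_trans hn hni.le
      have htk : t ≤ k := (hgbd i hi).2
      have htavg : γ₂ ≤ (∑ j ∈ Finset.range t, a j) / t := by
        have := hgpliss i hi t ht1 le_rfl
        rwa [Finset.sum_range_reflect a t] at this
      by_cases htl : t ≤ ℓ
      · exact absurd htavg (not_le.mpr (hobs t hni.le htl))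
      · push_neg at htl
        by_cases htk' : t < k
        · exfalso
          apply hmin t htk'
          refine ⟨htl.le, le_trans htk hkm, fun J h1 h2 => ?_⟩
          exact le_trans h32.le (hgpliss i hi J h1 h2)
        · omega
    -- Index `n` gives a Pliss time `> n`, hence equal to `k`.
    have hgn : g n = k := hkey n hnk₁ (by have := hgincr n hnk₁; omega)
    -- Index `n - 1` then gives a Pliss time equal to `n` itself.
    have hn1 : n - 1 < k₁ := by omega
    have hgn1 : g (n - 1) = n := by
      have h1 : n ≤ g (n - 1) := by have := hgincr (n - 1) hn1; omega
      have h2 : g (n - 1) < k := by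
        have := hgmono (n - 1) n (by omega) hnk₁
        omega
      rcases eq_or_lt_of_le h1 with h | h
      · omega
      · exact absurd (hkey (n - 1) hn1 h) (by omega)
    -- But then the initial `n`-average is at least `γ₂`, contradicting `hobs`.
    have : γ₂ ≤ (∑ j ∈ Finset.range n, a j) / n := by
      have := hgpliss (n - 1) hn1 n (by omega) (by omega)
      rw [hgn1] at this
      rwa [Finset.sum_range_reflect a n] at this
    exact absurd this (not_le.mpr (hobs n le_rfl hmn.le))
  -- Step 3: `k < m`, since the full average is `≥ γ₀ > γ₁`.
  have hkm' : k < m := by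
    rcases lt_or_eq_of_le hkm with h | h
    · exact h
    · exfalso
      have h' : k = m := h
      rw [h'] at hlt
      exact absurd havg (not_le.mpr (lt_trans hlt h10))
  exact ⟨k, hℓk, hkm', hkpliss, hlt⟩
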